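/- arXiv:0809.3568 — 3 statements merged into one kernel-verified Lean document; each statement's English description precedes it below -/
import Mathlib

section
/- Let 𝔤 = {X ∈ M₅(ℝ) : XᵀM + MX = 0}, where M = diag(−1,1,1,1,1). The linear map Φ : 𝔤 × ℝ^N → (ℝ⁵)^N defined by Φ(X, (c_n)) = (X n + c_n n)_{n∈N} is injective, and its image is contained in W. Consequently dim W ≥ dim 𝔤 + 96 = 106. -/
noncomputable section

open Matrix

/-- The Minkowski bilinear form of signature (1,4) on ℝ⁵. -/
def Bform (x y : Fin 5 → ℝ) : ℝ :=
  -(x 0 * y 0) + x 1 * y 1 + x 2 * y 2 + x 3 * y 3 + x 4 * y 4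

/-- The golden ratio τ = (1+√5)/2. -/
def gold : ℝ := (1 + Real.sqrt 5) / 2

/-- The 96-element set N of vectors obtained by applying even permutations of the last
4 coordinates to (√(2τ), ±τ, ±1, ±τ⁻¹, 0), with all 8 sign choices. -/
def Nset : Set (Fin 5 → ℝ) :=
  {v | ∃ σ : Equiv.Perm (Fin 4), Equiv.Perm.sign σ = 1 ∧
    ∃ ε : Fin 3 → ℝ, (∀ i, ε i = 1 ∨ ε i = -1) ∧
      v = Fin.cons (Real.sqrt (2 * gold))
            (fun i => ![ε 0 * gold, ε 1, ε 2 * gold⁻¹, 0] (σ i))}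

/-- The space W of infinitesimal deformations. -/
def Wsub : Submodule ℝ ((↥Nset) → Fin 5 → ℝ) where
  carrier := {w | ∀ m n : ↥Nset, m ≠ n → Bform m n = 0 →
    Bform (w m) (n : Fin 5 → ℝ) + Bform (m : Fin 5 → ℝ) (w n) = 0}
  add_mem' := by
    intro a b ha hb m n hmn h
    have h1 := ha m n hmn h
    have h2 := hb m n hmn h
    simp only [Bform, Pi.add_apply] at h1 h2 ⊢
    linarith
  zero_mem' := by
    intro m n hmn h
    simp [Bform]
  smul_mem' := by
    intro c a ha m n hmn h
    have h1 := ha m n hmn h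
    simp only [Bform, Pi.smul_apply, smul_eq_mul] at h1 ⊢
    linear_combination c * h1

/-- The matrix M = diag(−1,1,1,1,1) of the Minkowski form. -/
def Mink : Matrix (Fin 5) (Fin 5) ℝ := Matrix.diagonal ![-1, 1, 1, 1, 1]

/-- The Lie algebra 𝔤 = {X : Xᵀ M + M X = 0} of O(1,4). -/
def gSet : Submodule ℝ (Matrix (Fin 5) (Fin 5) ℝ) where
  carrier := {X | Xᵀ * Mink + Mink * X = 0}
  add_mem' := by
    intro X Y hX hY
    simp only [Set.mem_setOf_eq] at hX hY ⊢
    rw [Matrix.transpose_add, Matrix.add_mul, Matrix.mul_add]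
    have : Xᵀ * Mink + Yᵀ * Mink + (Mink * X + Mink * Y)
        = (Xᵀ * Mink + Mink * X) + (Yᵀ * Mink + Mink * Y) := by abel
    rw [this, hX, hY, add_zero]
  zero_mem' := by simp
  smul_mem' := by
    intro c X hX
    simp only [Set.mem_setOf_eq] at hX ⊢
    rw [Matrix.transpose_smul, Matrix.smul_mul, Matrix.mul_smul, ← smul_add, hX, smul_zero]

/-- The map Φ(X, (c_n)) = (X n + c_n n)_{n ∈ N}. -/
def Phi : (↥gSet × (↥Nset → ℝ)) → (↥Nset → Fin 5 → ℝ) :=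
  fun p n => (p.1 : Matrix (Fin 5) (Fin 5) ℝ).mulVec (n : Fin 5 → ℝ) + p.2 n • (n : Fin 5 → ℝ)


set_option maxHeartbeats 1000000

-- ## Golden ratio facts
lemma sqrt5_sq' : Real.sqrt 5 * Real.sqrt 5 = 5 := Real.mul_self_sqrt (by norm_num)
lemma sqrt5_lt' : Real.sqrt 5 < 3 := by nlinarith [sqrt5_sq', Real.sqrt_nonneg 5]
lemma sqrt5_gt' : 2 < Real.sqrt 5 := by nlinarith [sqrt5_sq', Real.sqrt_nonneg 5]
lemma g_gt_one : 1 < gold := by unfold gold; linarith [sqrt5_gt']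
lemma g_lt_two : gold < 2 := by unfold gold; linarith [sqrt5_lt']
lemma g_pos : 0 < gold := by linarith [g_gt_one]
lemma g_ne : gold ≠ 0 := ne_of_gt g_pos
lemma g_sq : gold ^ 2 = gold + 1 := by unfold gold; field_simp; nlinarith [sqrt5_sq']
lemma g_inv : gold⁻¹ = gold - 1 := by
  have h : gold * (gold - 1) = 1 := by nlinarith [g_sq]
  exact inv_eq_of_mul_eq_one_right h
lemma g_inv_pos : 0 < gold⁻¹ := by rw [g_inv]; linarith [g_gt_one]
lemma g_inv_lt_one : gold⁻¹ < 1 := by rw [g_inv]; linarith [g_lt_two]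
lemma sg_sq : Real.sqrt (2 * gold) * Real.sqrt (2 * gold) = 2 * gold :=
  Real.mul_self_sqrt (by linarith [g_pos])
lemma sg_pos : 0 < Real.sqrt (2 * gold) := Real.sqrt_pos.mpr (by linarith [g_pos])

-- ## Bform facts
lemma bform_comm (x y : Fin 5 → ℝ) : Bform x y = Bform y x := by simp [Bform]; ring

lemma bform_matrix (x y : Fin 5 → ℝ) : Bform x y = x ⬝ᵥ Mink.mulVec y := by
  simp [Bform, Mink, dotProduct, mulVec, Matrix.diagonal, Fin.sum_univ_five]

lemma dot_aux (A : Matrix (Fin 5) (Fin 5) ℝ) (u w : Fin 5 → ℝ) :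
    A.mulVec u ⬝ᵥ w = u ⬝ᵥ Aᵀ.mulVec w := by
  simp [mulVec, dotProduct, Fin.sum_univ_five, Matrix.transpose_apply]
  ring

lemma gSet_skew {X : Matrix (Fin 5) (Fin 5) ℝ} (hX : X ∈ gSet) (u v : Fin 5 → ℝ) :
    Bform (X.mulVec u) v + Bform u (X.mulVec v) = 0 := by
  have hX' : Xᵀ * Mink + Mink * X = 0 := hX
  rw [bform_matrix, bform_matrix, dot_aux, Matrix.mulVec_mulVec, Matrix.mulVec_mulVec,
    ← dotProduct_add, ← Matrix.add_mulVec, hX', Matrix.zero_mulVec, dotProduct_zero]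

-- ## Nset facts
lemma perm_sum (σ : Equiv.Perm (Fin 4)) (f : Fin 4 → ℝ) :
    f (σ 0) + f (σ 1) + f (σ 2) + f (σ 3) = f 0 + f 1 + f 2 + f 3 := by
  have := Equiv.sum_comp σ f
  simpa [Fin.sum_univ_four] using this

lemma bform_self {v : Fin 5 → ℝ} (hv : v ∈ Nset) : Bform v v = 4 - 2 * gold := by
  obtain ⟨σ, hσ, ε, hε, rfl⟩ := hv
  set A : Fin 4 → ℝ := ![ε 0 * gold, ε 1, ε 2 * gold⁻¹, 0] with hA
  have h0 : ε 0 * ε 0 = 1 := by rcases hε 0 with h | h <;> rw [h] <;> norm_num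
  have h1 : ε 1 * ε 1 = 1 := by rcases hε 1 with h | h <;> rw [h] <;> norm_num
  have h2 : ε 2 * ε 2 = 1 := by rcases hε 2 with h | h <;> rw [h] <;> norm_num
  have hsum := perm_sum σ (fun j => A j * A j)
  have hv : A 0 * A 0 + A 1 * A 1 + A 2 * A 2 + A 3 * A 3 = 4 := by
    simp only [hA, Matrix.cons_val_zero, Matrix.cons_val_one, Matrix.head_cons,
      Matrix.cons_val_two, Matrix.tail_cons, Matrix.cons_val_three]
    rw [g_inv]
    linear_combination gold^2 * h0 + h1 + (gold-1)^2 * h2 + 2 * g_sq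
  unfold Bform
  rw [show ((1:Fin 5)) = Fin.succ 0 from rfl] at *
  simp only [Fin.cons_zero, Fin.cons_succ]
  have e1 : ((2:Fin 5)) = Fin.succ 1 := rfl
  have e2 : ((3:Fin 5)) = Fin.succ 2 := rfl
  have e3 : ((4:Fin 5)) = Fin.succ 3 := rfl
  rw [e1, e2, e3]
  simp only [Fin.cons_succ]
  rw [sg_sq]
  linear_combination hsum + hv

lemma bform_self_ne {v : Fin 5 → ℝ} (hv : v ∈ Nset) : Bform v v ≠ 0 := by
  rw [bform_self hv]; have := g_lt_two; intro h; linarith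

def sg : ℝ := Real.sqrt (2 * gold)

def uvec (e0 e1 e2 : ℝ) : Fin 5 → ℝ := ![sg, e0 * gold, e1, e2 * gold⁻¹, 0]

lemma uvec_mem (e0 e1 e2 : ℝ) (h0 : e0 = 1 ∨ e0 = -1) (h1 : e1 = 1 ∨ e1 = -1)
    (h2 : e2 = 1 ∨ e2 = -1) : uvec e0 e1 e2 ∈ Nset := by
  refine ⟨1, by simp, ![e0, e1, e2], ?_, ?_⟩
  · intro i; fin_cases i
    · simpa using h0
    · simpa using h1
    · simpa using h2
  · funext j; fin_cases j <;> rfl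

def u5 : Fin 5 → ℝ := ![sg, 1, gold, 0, gold⁻¹]

lemma u5_mem : u5 ∈ Nset := by
  refine ⟨Equiv.swap 0 1 * Equiv.swap 2 3, by decide, ![1, 1, 1], ?_, ?_⟩
  · intro i; fin_cases i <;> norm_num
  · funext j
    induction j using Fin.cases with
    | zero => rfl
    | succ i =>
      rw [Fin.cons_succ]
      fin_cases i
      · show u5 1 = ![((![1,1,1] : Fin 3 → ℝ) 0) * gold, (![1,1,1] : Fin 3 → ℝ) 1, ((![1,1,1] : Fin 3 → ℝ) 2) * gold⁻¹, 0] ((Equiv.swap 0 1 * Equiv.swap 2 3 : Equiv.Perm (Fin 4)) 0)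
        rw [show ((Equiv.swap 0 1 * Equiv.swap 2 3 : Equiv.Perm (Fin 4))) 0 = 1 by decide]; norm_num [u5]
      · show u5 2 = ![((![1,1,1] : Fin 3 → ℝ) 0) * gold, (![1,1,1] : Fin 3 → ℝ) 1, ((![1,1,1] : Fin 3 → ℝ) 2) * gold⁻¹, 0] ((Equiv.swap 0 1 * Equiv.swap 2 3 : Equiv.Perm (Fin 4)) 1)
        rw [show ((Equiv.swap 0 1 * Equiv.swap 2 3 : Equiv.Perm (Fin 4))) 1 = 0 by decide]; norm_num [u5]; rfl
      · show u5 3 = ![((![1,1,1] : Fin 3 → ℝ) 0) * gold, (![1,1,1] : Fin 3 → ℝ) 1, ((![1,1,1] : Fin 3 → ℝ) 2) * gold⁻¹, 0] ((Equiv.swap 0 1 * Equiv.swap 2 3 : Equiv.Perm (Fin 4)) 2)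
        rw [show ((Equiv.swap 0 1 * Equiv.swap 2 3 : Equiv.Perm (Fin 4))) 2 = 3 by decide]; norm_num [u5]; rfl
      · show u5 4 = ![((![1,1,1] : Fin 3 → ℝ) 0) * gold, (![1,1,1] : Fin 3 → ℝ) 1, ((![1,1,1] : Fin 3 → ℝ) 2) * gold⁻¹, 0] ((Equiv.swap 0 1 * Equiv.swap 2 3 : Equiv.Perm (Fin 4)) 3)
        rw [show ((Equiv.swap 0 1 * Equiv.swap 2 3 : Equiv.Perm (Fin 4))) 3 = 2 by decide]; norm_num [u5]; exact (one_mul _).symm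

-- ## Counting Nset
def sgn (b : Bool) : ℝ := if b then 1 else -1

lemma sgn_cases (b : Bool) : sgn b = 1 ∨ sgn b = -1 := by cases b <;> simp [sgn]

lemma sgn_inj : Function.Injective sgn := by
  intro a b h; cases a <;> cases b <;> simp [sgn] at h ⊢ <;> norm_num at h

def Fmap : ({σ : Equiv.Perm (Fin 4) // Equiv.Perm.sign σ = 1} × (Fin 3 → Bool)) → (Fin 5 → ℝ) :=
  fun p => Fin.cons (Real.sqrt (2 * gold))
    (fun i => ![sgn (p.2 0) * gold, sgn (p.2 1), sgn (p.2 2) * gold⁻¹, 0] (p.1.1 i))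

lemma Nset_eq_range : Nset = Set.range Fmap := by
  ext v
  constructor
  · rintro ⟨σ, hσ, ε, hε, rfl⟩
    refine ⟨⟨⟨σ, hσ⟩, fun i => decide (ε i = 1)⟩, ?_⟩
    have hs : ∀ i, sgn (decide (ε i = 1)) = ε i := by
      intro i
      rcases hε i with h | h <;> rw [h] <;> norm_num [sgn]
    simp only [Fmap, hs]
  · rintro ⟨⟨⟨σ, hσ⟩, b⟩, rfl⟩
    exact ⟨σ, hσ, ![sgn (b 0), sgn (b 1), sgn (b 2)],
      by intro i; fin_cases i <;> simpa using sgn_cases _, rfl⟩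

def mvec : Fin 4 → ℝ := ![gold, 1, gold⁻¹, 0]

lemma mvec_inj : Function.Injective mvec := by
  have h1 := g_gt_one; have h2 := g_inv_pos; have h3 := g_inv_lt_one
  intro a b hab
  fin_cases a <;> fin_cases b <;> simp [mvec] at hab ⊢ <;> linarith

lemma abs_Fcoord (b : Fin 3 → Bool) (j : Fin 4) :
    |![sgn (b 0) * gold, sgn (b 1), sgn (b 2) * gold⁻¹, 0] j| = mvec j := by
  have h1 := g_pos; have h2 := g_inv_pos
  fin_cases j
  · show |sgn (b 0) * gold| = gold
    rcases sgn_cases (b 0) with h | h <;> rw [h]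
    · rw [one_mul, abs_of_pos h1]
    · rw [neg_one_mul, abs_neg, abs_of_pos h1]
  · show |sgn (b 1)| = 1
    rcases sgn_cases (b 1) with h | h <;> rw [h] <;> norm_num
  · show |sgn (b 2) * gold⁻¹| = gold⁻¹
    rcases sgn_cases (b 2) with h | h <;> rw [h]
    · rw [one_mul, abs_of_pos h2]
    · rw [neg_one_mul, abs_neg, abs_of_pos h2]
  · show |(0:ℝ)| = 0
    exact abs_zero

lemma Fmap_inj : Function.Injective Fmap := by
  rintro ⟨⟨σ, hσ⟩, b⟩ ⟨⟨σ', hσ'⟩, b'⟩ h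
  have htail : ∀ i : Fin 4,
      ![sgn (b 0) * gold, sgn (b 1), sgn (b 2) * gold⁻¹, 0] (σ i)
        = ![sgn (b' 0) * gold, sgn (b' 1), sgn (b' 2) * gold⁻¹, 0] (σ' i) := by
    intro i
    have := congrFun h (Fin.succ i)
    simpa only [Fmap, Fin.cons_succ] using this
  have hperm : ∀ i : Fin 4, σ i = σ' i := by
    intro i
    apply mvec_inj
    rw [← abs_Fcoord b (σ i), ← abs_Fcoord b' (σ' i), htail i]
  have hσeq : σ = σ' := Equiv.ext hperm
  subst hσeq
  have hA : ∀ j : Fin 4,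
      ![sgn (b 0) * gold, sgn (b 1), sgn (b 2) * gold⁻¹, 0] j
        = ![sgn (b' 0) * gold, sgn (b' 1), sgn (b' 2) * gold⁻¹, 0] j := by
    intro j
    have := htail (σ.symm j)
    rwa [Equiv.apply_symm_apply] at this
  have hb : b = b' := by
    funext i
    fin_cases i
    · apply sgn_inj
      have h0 := hA 0
      simp only [Matrix.cons_val_zero] at h0
      exact mul_right_cancel₀ g_ne h0
    · apply sgn_inj
      have h1 := hA 1
      simp only [Matrix.cons_val_one, Matrix.head_cons, Matrix.cons_val_zero] at h1
      exact h1
    · apply sgn_inj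
      have h2' : sgn (b 2) * gold⁻¹ = sgn (b' 2) * gold⁻¹ := by
        simpa only [Matrix.cons_val_two, Matrix.tail_cons, Matrix.head_cons] using hA 2
      exact mul_right_cancel₀ (ne_of_gt g_inv_pos) h2'
  rw [hb]

instance NsetFinite : Finite ↥Nset := by
  rw [Nset_eq_range]; exact Set.finite_range Fmap

noncomputable instance NsetFintype : Fintype ↥Nset :=
  Set.Finite.fintype (by rw [Nset_eq_range]; exact Set.finite_range Fmap)

lemma Nset_card : Fintype.card ↥Nset = 96 := by
  have h1 : Nat.card ↥Nset = 96 := by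
    rw [Nset_eq_range, Nat.card_range_of_injective Fmap_inj]
    have halt : Fintype.card {σ : Equiv.Perm (Fin 4) // Equiv.Perm.sign σ = 1} = 12 := by
      have hc : Fintype.card {σ : Equiv.Perm (Fin 4) // Equiv.Perm.sign σ = 1}
          = Fintype.card (alternatingGroup (Fin 4)) :=
        Fintype.card_congr (Equiv.subtypeEquivRight fun σ =>
          (Equiv.Perm.mem_alternatingGroup).symm)
      have h2 := two_mul_card_alternatingGroup (α := Fin 4)
      rw [Fintype.card_perm] at h2
      simp only [Fintype.card_fin] at h2
      norm_num [Nat.factorial] at h2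
      omega
    rw [Nat.card_eq_fintype_card]
    rw [Fintype.card_prod, halt, Fintype.card_fun]
    simp
  rw [← Nat.card_eq_fintype_card, h1]

-- ## Dimension of gSet
def Qmat (c : Fin 10 → ℝ) : Matrix (Fin 5) (Fin 5) ℝ :=
  !![0, c 0, c 1, c 2, c 3;
     c 0, 0, c 4, c 5, c 6;
     c 1, -c 4, 0, c 7, c 8;
     c 2, -c 5, -c 7, 0, c 9;
     c 3, -c 6, -c 8, -c 9, 0]

lemma Qmat_mem (c : Fin 10 → ℝ) : Qmat c ∈ gSet := by
  show _ * _ + _ * _ = 0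
  ext i j
  rw [Matrix.add_apply, Mink, Matrix.mul_diagonal, Matrix.diagonal_mul, Matrix.transpose_apply,
    Matrix.zero_apply]
  fin_cases i <;> fin_cases j <;> simp [Qmat]

def QL : (Fin 10 → ℝ) →ₗ[ℝ] ↥gSet where
  toFun c := ⟨Qmat c, Qmat_mem c⟩
  map_add' a b := by
    apply Subtype.ext
    show Qmat (a + b) = Qmat a + Qmat b
    ext i j
    fin_cases i <;> fin_cases j <;> first | rfl | (simp [Qmat]; try ring)
  map_smul' r a := by
    apply Subtype.ext
    show Qmat (r • a) = r • Qmat a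
    ext i j
    fin_cases i <;> fin_cases j <;> first | rfl | (simp [Qmat]; try ring)

def PL : ↥gSet →ₗ[ℝ] (Fin 10 → ℝ) where
  toFun X := ![X.1 0 1, X.1 0 2, X.1 0 3, X.1 0 4, X.1 1 2, X.1 1 3, X.1 1 4, X.1 2 3, X.1 2 4, X.1 3 4]
  map_add' a b := by funext k; fin_cases k <;> rfl
  map_smul' r a := by funext k; fin_cases k <;> rfl

lemma PL_QL (c : Fin 10 → ℝ) : PL (QL c) = c := by
  funext k; fin_cases k <;> rfl

lemma QL_PL (X : ↥gSet) : QL (PL X) = X := by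
  have key : ∀ i j : Fin 5, X.1 j i * ![-1,1,1,1,1] j + ![-1,1,1,1,1] i * X.1 i j = 0 := by
    intro i j
    have h := congrFun (congrFun X.2 i) j
    simpa [Mink, Matrix.add_apply, Matrix.mul_diagonal, Matrix.diagonal_mul,
      Matrix.transpose_apply] using h
  have k00 := key 0 0; have k11 := key 1 1; have k22 := key 2 2
  have k33 := key 3 3; have k44 := key 4 4
  have k10 := key 1 0; have k20 := key 2 0; have k30 := key 3 0; have k40 := key 4 0
  have k21 := key 2 1; have k31 := key 3 1; have k41 := key 4 1
  have k32 := key 3 2; have k42 := key 4 2; have k43 := key 4 3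
  simp only [Matrix.cons_val_zero, Matrix.cons_val_one, Matrix.head_cons, Matrix.cons_val_two,
    Matrix.tail_cons, Matrix.cons_val_three, Matrix.cons_val_four] at k00 k11 k22 k33 k44 k10 k20 k30 k40 k21 k31 k41 k32 k42 k43
  apply Subtype.ext
  show Qmat (PL X) = X.1
  ext i j
  fin_cases i
  · fin_cases j
    · show (0:ℝ) = (X.1 : Matrix (Fin 5) (Fin 5) ℝ) 0 0
      linarith [k00]
    · rfl
    · rfl
    · rfl
    · rfl
  · fin_cases j
    · show ((X.1 : Matrix (Fin 5) (Fin 5) ℝ) 0 1) = (X.1 : Matrix (Fin 5) (Fin 5) ℝ) 1 0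
      linarith [k10]
    · show (0:ℝ) = (X.1 : Matrix (Fin 5) (Fin 5) ℝ) 1 1
      linarith [k11]
    · rfl
    · rfl
    · rfl
  · fin_cases j
    · show ((X.1 : Matrix (Fin 5) (Fin 5) ℝ) 0 2) = (X.1 : Matrix (Fin 5) (Fin 5) ℝ) 2 0
      linarith [k20]
    · show -((X.1 : Matrix (Fin 5) (Fin 5) ℝ) 1 2) = (X.1 : Matrix (Fin 5) (Fin 5) ℝ) 2 1
      linarith [k21]
    · show (0:ℝ) = (X.1 : Matrix (Fin 5) (Fin 5) ℝ) 2 2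
      linarith [k22]
    · rfl
    · rfl
  · fin_cases j
    · show ((X.1 : Matrix (Fin 5) (Fin 5) ℝ) 0 3) = (X.1 : Matrix (Fin 5) (Fin 5) ℝ) 3 0
      linarith [k30]
    · show -((X.1 : Matrix (Fin 5) (Fin 5) ℝ) 1 3) = (X.1 : Matrix (Fin 5) (Fin 5) ℝ) 3 1
      linarith [k31]
    · show -((X.1 : Matrix (Fin 5) (Fin 5) ℝ) 2 3) = (X.1 : Matrix (Fin 5) (Fin 5) ℝ) 3 2
      linarith [k32]
    · show (0:ℝ) = (X.1 : Matrix (Fin 5) (Fin 5) ℝ) 3 3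
      linarith [k33]
    · rfl
  · fin_cases j
    · show ((X.1 : Matrix (Fin 5) (Fin 5) ℝ) 0 4) = (X.1 : Matrix (Fin 5) (Fin 5) ℝ) 4 0
      linarith [k40]
    · show -((X.1 : Matrix (Fin 5) (Fin 5) ℝ) 1 4) = (X.1 : Matrix (Fin 5) (Fin 5) ℝ) 4 1
      linarith [k41]
    · show -((X.1 : Matrix (Fin 5) (Fin 5) ℝ) 2 4) = (X.1 : Matrix (Fin 5) (Fin 5) ℝ) 4 2
      linarith [k42]
    · show -((X.1 : Matrix (Fin 5) (Fin 5) ℝ) 3 4) = (X.1 : Matrix (Fin 5) (Fin 5) ℝ) 4 3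
      linarith [k43]
    · show (0:ℝ) = (X.1 : Matrix (Fin 5) (Fin 5) ℝ) 4 4
      linarith [k44]

lemma gSet_finrank : Module.finrank ℝ ↥gSet = 10 := by
  have e : (Fin 10 → ℝ) ≃ₗ[ℝ] ↥gSet :=
    LinearEquiv.ofLinear QL PL (LinearMap.ext QL_PL) (LinearMap.ext PL_QL)
  rw [← e.finrank_eq]
  simp

-- ## Properties of Phi
lemma phi_mem (p : ↥gSet × (↥Nset → ℝ)) : Phi p ∈ Wsub := by
  intro m n hmn hB
  have hs := gSet_skew p.1.2 (m : Fin 5 → ℝ) (n : Fin 5 → ℝ)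
  simp only [Phi, Bform, Pi.add_apply, Pi.smul_apply, smul_eq_mul] at hs hB ⊢
  linear_combination hs + (p.2 m + p.2 n) * hB

lemma phi_inj : Function.Injective Phi := by
  rintro ⟨X, c⟩ ⟨X', c'⟩ h
  have hn : ∀ n : ↥Nset, (X : Matrix (Fin 5) (Fin 5) ℝ).mulVec n + c n • (n : Fin 5 → ℝ)
      = (X' : Matrix (Fin 5) (Fin 5) ℝ).mulVec n + c' n • (n : Fin 5 → ℝ) := fun n => congrFun h n
  set Y : Matrix (Fin 5) (Fin 5) ℝ := ↑X - ↑X' with hYdef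
  have hY : Y ∈ gSet := sub_mem X.2 X'.2
  have hYn : ∀ n : ↥Nset, Y.mulVec ↑n = (c' n - c n) • (n : Fin 5 → ℝ) := by
    intro n
    funext j
    have hj := congrFun (hn n) j
    simp only [Pi.add_apply, Pi.smul_apply, smul_eq_mul] at hj
    simp only [hYdef, Matrix.sub_mulVec, Pi.sub_apply, Pi.smul_apply, smul_eq_mul]
    nlinarith [hj]
  have hc : ∀ n : ↥Nset, c' n = c n := by
    intro n
    have h1 : Bform (Y.mulVec ↑n) ↑n = 0 := by
      have hs := gSet_skew hY ↑n ↑n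
      have hcomm := bform_comm (Y.mulVec ↑n) ↑n
      linarith
    rw [hYn n] at h1
    have h2 : Bform ((c' n - c n) • (n : Fin 5 → ℝ)) ↑n = (c' n - c n) * Bform ↑n ↑n := by
      simp only [Bform, Pi.smul_apply, smul_eq_mul]; ring
    rw [h2] at h1
    rcases mul_eq_zero.mp h1 with h3 | h3
    · linarith
    · exact absurd h3 (bform_self_ne n.2)
  have hY0 : ∀ n : ↥Nset, Y.mulVec ↑n = 0 := by
    intro n; rw [hYn n, hc n, sub_self, zero_smul]
  have hYzero : Y = 0 := by
    ext i j
    have h1 := congrFun (hY0 ⟨uvec 1 1 1, uvec_mem 1 1 1 (Or.inl rfl) (Or.inl rfl) (Or.inl rfl)⟩) i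
    have h2 := congrFun (hY0 ⟨uvec (-1) 1 1, uvec_mem (-1) 1 1 (Or.inr rfl) (Or.inl rfl) (Or.inl rfl)⟩) i
    have h3 := congrFun (hY0 ⟨uvec 1 (-1) 1, uvec_mem 1 (-1) 1 (Or.inl rfl) (Or.inr rfl) (Or.inl rfl)⟩) i
    have h4 := congrFun (hY0 ⟨uvec 1 1 (-1), uvec_mem 1 1 (-1) (Or.inl rfl) (Or.inl rfl) (Or.inr rfl)⟩) i
    have h5 := congrFun (hY0 ⟨u5, u5_mem⟩) i
    simp only [uvec, u5, Matrix.mulVec, dotProduct, Fin.sum_univ_five, Matrix.cons_val_zero,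
      Matrix.cons_val_one, Matrix.head_cons, Matrix.cons_val_two, Matrix.tail_cons,
      Matrix.cons_val_three, Matrix.cons_val_four, Pi.zero_apply] at h1 h2 h3 h4 h5
    have hb : Y i 1 = 0 := by
      have hyy : Y i 1 * (2 * gold) = 0 := by linarith
      rcases mul_eq_zero.mp hyy with hz | hz
      · exact hz
      · exfalso; have := g_pos; linarith
    have hcc : Y i 2 = 0 := by linarith
    have hd : Y i 3 = 0 := by
      have hyy : Y i 3 * (2 * gold⁻¹) = 0 := by linarith
      rcases mul_eq_zero.mp hyy with hz | hz
      · exact hz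
      · exfalso; have := g_inv_pos; linarith
    have ha : Y i 0 = 0 := by
      have hyy : Y i 0 * sg = 0 := by linarith
      rcases mul_eq_zero.mp hyy with hz | hz
      · exact hz
      · exfalso; have := sg_pos; rw [show Real.sqrt (2 * gold) = sg from rfl] at this; linarith
    have he : Y i 4 = 0 := by
      rw [ha, hb, hcc] at h5
      have hyy : Y i 4 * gold⁻¹ = 0 := by linarith
      rcases mul_eq_zero.mp hyy with hz | hz
      · exact hz
      · exfalso; have := g_inv_pos; linarith
    rw [Matrix.zero_apply]
    fin_cases j
    · exact ha
    · exact hb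
    · exact hcc
    · exact hd
    · exact he
  have hXX : (X : Matrix (Fin 5) (Fin 5) ℝ) = ↑X' := by
    have := sub_eq_zero.mp hYzero
    exact this
  simp only [Prod.mk.injEq]
  exact ⟨Subtype.ext hXX, funext fun n => (hc n).symm⟩

def Psi : (↥gSet × (↥Nset → ℝ)) →ₗ[ℝ] ↥Wsub where
  toFun p := ⟨Phi p, phi_mem p⟩
  map_add' p q := by
    apply Subtype.ext
    show Phi (p + q) = Phi p + Phi q
    funext n
    simp only [Phi, Pi.add_apply, Prod.fst_add, Prod.snd_add, Submodule.coe_add,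
      Matrix.add_mulVec, add_smul]
    abel
  map_smul' r p := by
    apply Subtype.ext
    show Phi (r • p) = r • Phi p
    funext n
    simp only [Phi, Pi.smul_apply, Prod.smul_fst, Prod.smul_snd, Submodule.coe_smul,
      Matrix.smul_mulVec, smul_eq_mul, mul_smul]
    module

lemma psi_inj : Function.Injective Psi := fun a b hab =>
  phi_inj (congrArg Subtype.val hab)


/-- Φ is injective and its image is contained in W; consequently
dim W ≥ dim 𝔤 + 96 = 106. -/
theorem stmt1 :
    Function.Injective Phi ∧ (∀ p, Phi p ∈ Wsub) ∧
    Module.finrank ℝ gSet + 96 = 106 ∧ 106 ≤ Module.finrank ℝ Wsub := by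
  refine ⟨phi_inj, phi_mem, ?_, ?_⟩
  · rw [gSet_finrank]
  · have hdom : Module.finrank ℝ (↥gSet × (↥Nset → ℝ)) = 106 := by
      rw [Module.finrank_prod, gSet_finrank, Module.finrank_pi, Nset_card]
    rw [← hdom]
    exact LinearMap.finrank_le_finrank_of_injective psi_inj
end
end

section
/- For each n ∈ N let R_n denote the Minkowski reflection R_n(v) = v − 2(B(v,n)/B(n,n)) n, a 5×5 real matrix, and let Γ ≤ GL(5,ℝ) be the subgroup generated by {R_n : n ∈ N}. Then there exists ε > 0 with the following property: for every group homomorphism ρ : Γ → GL(5,ℝ) such that for all n ∈ N the matrix ρ(R_n) satisfies ρ(R_n)ᵀ M ρ(R_n) = M and ‖ρ(R_n) − R_n‖ < ε, each ρ(R_n) is a reflection, i.e., ρ(R_n)² = I and dim ker(ρ(R_n) + I) = 1. -/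
noncomputable section

open Matrix

attribute [local instance] Matrix.normedAddCommGroup

/-- The matrix of the Minkowski reflection v ↦ v − 2(B(v,n)/B(n,n)) n. -/
def reflM (v : Fin 5 → ℝ) : Matrix (Fin 5) (Fin 5) ℝ :=
  1 - (2 / Bform v v) •
    Matrix.of (fun i j => v i * ((if j = 0 then (-1 : ℝ) else 1) * v j))

/-- The subgroup Γ of GL(5,ℝ) generated by the reflections in the 96 walls. -/
def Gamma : Subgroup (GL (Fin 5) ℝ) :=
  Subgroup.closure {g : GL (Fin 5) ℝ | ∃ n ∈ Nset, (↑g : Matrix (Fin 5) (Fin 5) ℝ) = reflM n}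


lemma Bform_Nset {n : Fin 5 → ℝ} (hn : n ∈ Nset) : Bform n n = 3 - Real.sqrt 5 := by
  obtain ⟨σ, -, ε, hε, rfl⟩ := hn
  set w : Fin 4 → ℝ := ![ε 0 * gold, ε 1, ε 2 * gold⁻¹, 0] with hw
  set f : Fin 4 → ℝ := fun i => w (σ i) with hf
  set n : Fin 5 → ℝ := Fin.cons (Real.sqrt (2 * gold)) f with hn
  have hs0 : (0:ℝ) ≤ Real.sqrt 5 := Real.sqrt_nonneg 5
  have hs : Real.sqrt 5 ^ 2 = 5 := Real.sq_sqrt (by norm_num)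
  have hg : (0:ℝ) < gold := by unfold gold; linarith
  have h0 : n 0 = Real.sqrt (2 * gold) := Fin.cons_zero _ _
  have h1 : n 1 = f 0 := by rw [hn, show (1:Fin 5) = Fin.succ 0 by rfl, Fin.cons_succ]
  have h2 : n 2 = f 1 := by rw [hn, show (2:Fin 5) = Fin.succ 1 by rfl, Fin.cons_succ]
  have h3 : n 3 = f 2 := by rw [hn, show (3:Fin 5) = Fin.succ 2 by rfl, Fin.cons_succ]
  have h4 : n 4 = f 3 := by rw [hn, show (4:Fin 5) = Fin.succ 3 by rfl, Fin.cons_succ]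
  have h02 : Real.sqrt (2 * gold) ^ 2 = 2 * gold := Real.sq_sqrt (by linarith)
  have hsum : f 0 ^2 + f 1 ^2 + f 2 ^2 + f 3 ^2 = w 0 ^2 + w 1 ^2 + w 2 ^2 + w 3 ^2 := by
    have := Equiv.sum_comp σ (fun j => w j ^ 2)
    rw [Fin.sum_univ_four, Fin.sum_univ_four] at this
    exact this
  have he0 : ε 0 ^ 2 = 1 := by rcases hε 0 with h | h <;> rw [h] <;> norm_num
  have he1 : ε 1 ^ 2 = 1 := by rcases hε 1 with h | h <;> rw [h] <;> norm_num
  have he2 : ε 2 ^ 2 = 1 := by rcases hε 2 with h | h <;> rw [h] <;> norm_num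
  have hginv : gold⁻¹ ^ 2 = (3 - Real.sqrt 5) / 2 := by
    rw [inv_pow, eq_div_iff (by norm_num : (2:ℝ) ≠ 0), inv_mul_eq_div,
      div_eq_iff (by positivity)]
    unfold gold; nlinarith
  have hgsq : gold ^ 2 = (3 + Real.sqrt 5) / 2 := by unfold gold; nlinarith
  have hw0 : w 0 = ε 0 * gold := rfl
  have hw1 : w 1 = ε 1 := rfl
  have hw2 : w 2 = ε 2 * gold⁻¹ := rfl
  have hw3 : w 3 = 0 := rfl
  unfold Bform
  rw [h0, h1, h2, h3, h4]
  have key : f 0 * f 0 + f 1 * f 1 + f 2 * f 2 + f 3 * f 3 = w 0 ^2 + w 1 ^2 + w 2 ^2 + w 3 ^2 := by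
    rw [← hsum]; ring
  rw [show -(Real.sqrt (2*gold) * Real.sqrt (2*gold)) + f 0 * f 0 + f 1 * f 1 + f 2 * f 2 + f 3 * f 3
      = -(Real.sqrt (2*gold) ^ 2) + (f 0 * f 0 + f 1 * f 1 + f 2 * f 2 + f 3 * f 3) by ring,
    key, h02, hw0, hw1, hw2, hw3, mul_pow, mul_pow, he0, he1, he2, hgsq, hginv]
  unfold gold; ring

lemma Bform_Nset_ne {n : Fin 5 → ℝ} (hn : n ∈ Nset) : Bform n n ≠ 0 := by
  rw [Bform_Nset hn]
  have hs : Real.sqrt 5 ^ 2 = 5 := Real.sq_sqrt (by norm_num)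
  have hs0 : (0:ℝ) ≤ Real.sqrt 5 := Real.sqrt_nonneg 5
  nlinarith

lemma reflM_mul_self {n : Fin 5 → ℝ} (hB : Bform n n ≠ 0) : reflM n * reflM n = 1 := by
  set B := Bform n n with hBdef
  set c : ℝ := 2 / B with hc
  set P : Matrix (Fin 5) (Fin 5) ℝ :=
    Matrix.of (fun i j => n i * ((if j = 0 then (-1:ℝ) else 1) * n j)) with hP
  have hPP : P * P = B • P := by
    ext i j
    simp only [Matrix.mul_apply, Matrix.smul_apply, Matrix.of_apply, Fin.sum_univ_five, hP,
      smul_eq_mul, eq_self_iff_true, if_true, if_neg (by decide : ¬((1:Fin 5) = 0)),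
      if_neg (by decide : ¬((2:Fin 5) = 0)), if_neg (by decide : ¬((3:Fin 5) = 0)),
      if_neg (by decide : ¬((4:Fin 5) = 0))]
    unfold Bform at hBdef
    rw [hBdef]
    ring
  have hcB : c * B = 2 := by rw [hc]; field_simp
  have hx : (c • P) * (c • P) = c • P + c • P := by
    rw [smul_mul_assoc, mul_smul_comm, hPP, smul_smul, smul_smul, mul_assoc, hcB, mul_two,
      add_smul]
  have sq_expand : ∀ x : Matrix (Fin 5) (Fin 5) ℝ, (1 - x)*(1 - x) = 1 - x - x + x*x := by
    intro x; noncomm_ring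
  have expand : reflM n * reflM n = 1 - c•P - c•P + ((c•P) * (c•P)) := by
    rw [reflM, ← hBdef, ← hc, ← hP]; exact sq_expand _
  rw [expand, hx]; abel

lemma reflM_trace {n : Fin 5 → ℝ} (hB : Bform n n ≠ 0) : (reflM n).trace = 3 := by
  have h : Matrix.trace (Matrix.of (fun i j => n i * ((if j = 0 then (-1:ℝ) else 1) * n j)))
      = Bform n n := by
    simp only [Matrix.trace, Matrix.diag, Matrix.of_apply, Fin.sum_univ_five,
      eq_self_iff_true, if_true, if_neg (by decide : ¬((1:Fin 5) = 0)),
      if_neg (by decide : ¬((2:Fin 5) = 0)), if_neg (by decide : ¬((3:Fin 5) = 0)),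
      if_neg (by decide : ¬((4:Fin 5) = 0)), Bform]
    ring
  rw [reflM, Matrix.trace_sub, Matrix.trace_smul, h, Matrix.trace_one, smul_eq_mul,
    div_mul_cancel₀ _ hB]
  norm_num

lemma ker_dim_one (A : Matrix (Fin 5) (Fin 5) ℝ) (hA : A * A = 1)
    (htr : |A.trace - 3| < 2) :
    Module.finrank ℝ (LinearMap.ker (Matrix.toLin' (A + 1))) = 1 := by
  set Q : Matrix (Fin 5) (Fin 5) ℝ := (2⁻¹ : ℝ) • (1 - A) with hQ
  have h1 : (A + 1) * Q = 0 := by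
    rw [hQ, mul_smul_comm, mul_sub, mul_one, add_mul, one_mul, hA]
    simp only [smul_eq_zero]
    right; abel
  have hproj : LinearMap.IsProj (LinearMap.ker (Matrix.toLin' (A + 1))) (Matrix.toLin' Q) := by
    constructor
    · intro x
      rw [LinearMap.mem_ker, ← Matrix.toLin'_mul_apply, h1]
      simp
    · intro x hx
      rw [LinearMap.mem_ker] at hx
      simp only [Matrix.toLin'_apply] at hx ⊢
      rw [Matrix.add_mulVec, Matrix.one_mulVec] at hx
      have hAx : A.mulVec x = -x := by linear_combination (norm := module) hx
      rw [hQ, Matrix.smul_mulVec, Matrix.sub_mulVec, Matrix.one_mulVec, hAx]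
      module
  have htr2 : LinearMap.trace ℝ _ (Matrix.toLin' Q) = Q.trace := by
    rw [LinearMap.trace_eq_matrix_trace ℝ (Pi.basisFun ℝ (Fin 5)),
      LinearMap.toMatrix_eq_toMatrix', LinearMap.toMatrix'_toLin']
  have hQtr : Q.trace = 2⁻¹ * (5 - A.trace) := by
    rw [hQ, Matrix.trace_smul, Matrix.trace_sub, Matrix.trace_one]
    simp [smul_eq_mul]
  have hfin := hproj.trace
  rw [htr2, hQtr] at hfin
  have habs := abs_lt.mp htr
  set k := Module.finrank ℝ (LinearMap.ker (Matrix.toLin' (A + 1)))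
  have hlt : (k:ℝ) < 2 := by rw [← hfin]; linarith
  have hgt : (0:ℝ) < (k:ℝ) := by
    rcases Nat.eq_zero_or_pos k with h | h
    · exfalso
      have hk0 : (k:ℝ) = 0 := by exact_mod_cast h
      rw [hk0] at hfin
      linarith
    · exact_mod_cast h
  have h2 : k < 2 := by exact_mod_cast hlt
  have h3 : 0 < k := by exact_mod_cast hgt
  omega

/-- Representations of Γ close to the inclusion that send the generating reflections
into O(1,4) send each generating reflection to a reflection. -/
theorem stmt3 :
    ∃ ε > 0, ∀ ρ : Gamma →* GL (Fin 5) ℝ,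
      (∀ (g : Gamma) (n : Fin 5 → ℝ), n ∈ Nset →
          ((g : GL (Fin 5) ℝ) : Matrix (Fin 5) (Fin 5) ℝ) = reflM n →
          ((ρ g : Matrix (Fin 5) (Fin 5) ℝ)ᵀ * Mink * (ρ g : Matrix (Fin 5) (Fin 5) ℝ) = Mink ∧
            ‖(ρ g : Matrix (Fin 5) (Fin 5) ℝ) - reflM n‖ < ε)) →
      ∀ (g : Gamma) (n : Fin 5 → ℝ), n ∈ Nset →
        ((g : GL (Fin 5) ℝ) : Matrix (Fin 5) (Fin 5) ℝ) = reflM n →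
        ((ρ g : Matrix (Fin 5) (Fin 5) ℝ) * (ρ g : Matrix (Fin 5) (Fin 5) ℝ) = 1 ∧
          Module.finrank ℝ
            (LinearMap.ker (Matrix.toLin' ((ρ g : Matrix (Fin 5) (Fin 5) ℝ) + 1))) = 1) := by
  refine ⟨1/5, by norm_num, ?_⟩
  intro ρ hρ g n hn hg
  obtain ⟨-, hnorm⟩ := hρ g n hn hg
  have hB := Bform_Nset_ne hn
  set A : Matrix (Fin 5) (Fin 5) ℝ := (ρ g : Matrix (Fin 5) (Fin 5) ℝ) with hA
  -- g is an involution in Γ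
  have hg2 : g * g = 1 := by
    apply Subtype.ext
    apply Units.ext
    push_cast [hg]
    exact reflM_mul_self hB
  have hAA : A * A = 1 := by
    have : ρ g * ρ g = 1 := by rw [← MonoidHom.map_mul, hg2, MonoidHom.map_one]
    calc A * A = ((ρ g * ρ g : GL (Fin 5) ℝ) : Matrix (Fin 5) (Fin 5) ℝ) := rfl
    _ = 1 := by rw [this]; rfl
  refine ⟨hAA, ?_⟩
  -- trace estimate
  have htrR : (reflM n).trace = 3 := reflM_trace hB
  have hentry : ∀ i : Fin 5, |(A - reflM n) i i| ≤ ‖A - reflM n‖ := fun i =>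
    Matrix.norm_entry_le_entrywise_sup_norm (A - reflM n)
  have htrdiff : |(A - reflM n).trace| ≤ 5 * ‖A - reflM n‖ := by
    have h1 : |(A - reflM n).trace| ≤ ∑ i : Fin 5, |(A - reflM n) i i| :=
      Finset.abs_sum_le_sum_abs _ _
    have h2 : ∑ i : Fin 5, |(A - reflM n) i i| ≤ ∑ _i : Fin 5, ‖A - reflM n‖ :=
      Finset.sum_le_sum (fun i _ => hentry i)
    simp only [Finset.sum_const, Finset.card_univ, Fintype.card_fin, nsmul_eq_mul] at h2
    calc |(A - reflM n).trace| ≤ _ := h1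
    _ ≤ (5:ℕ) * ‖A - reflM n‖ := h2
    _ = 5 * ‖A - reflM n‖ := by norm_num
  have htr : |A.trace - 3| < 2 := by
    have : (A - reflM n).trace = A.trace - 3 := by
      rw [Matrix.trace_sub, htrR]
    rw [this] at htrdiff
    have : 5 * ‖A - reflM n‖ < 5 * (1/5) := by
      have h5 : (0:ℝ) < 5 := by norm_num
      exact (mul_lt_mul_iff_right₀ h5).mpr hnorm
    linarith
  exact ker_dim_one A hAA htr
end
end

section
/- Let C be the 24-element set consisting of the 8 vectors obtained by permuting the last 4 coordinates of (√(2τ), ±2, 0, 0, 0) together with the 16 vectors (√(2τ), ±1, ±1, ±1, ±1). Then for all distinct u, v ∈ C one has B(u,v)² > B(u,u)·B(v,v); in particular B(u,v) ≠ 0, so the 24 corresponding hyperplanes in hyperbolic 4-space are pairwise disjoint (ultraparallel). -/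
noncomputable section

/-- Item (1): the 8 vectors obtained by permuting the last 4 coordinates of
(√(2τ), ±2, 0, 0, 0). -/
def item1 : Set (Fin 5 → ℝ) :=
  {v | ∃ (j : Fin 4) (s : ℝ), (s = 1 ∨ s = -1) ∧
    v = Fin.cons (Real.sqrt (2 * gold)) (fun i => if i = j then s * 2 else 0)}

/-- Item (2): the 16 vectors (√(2τ), ±1, ±1, ±1, ±1). -/
def item2 : Set (Fin 5 → ℝ) :=
  {v | ∃ ε : Fin 4 → ℝ, (∀ i, ε i = 1 ∨ ε i = -1) ∧
    v = Fin.cons (Real.sqrt (2 * gold)) ε}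

/-- Item (3): the 96 vectors obtained by applying even permutations of the last 4
coordinates to (√(2τ), ±τ, ±1, ±τ⁻¹, 0), with all 8 sign choices. -/
def item3 : Set (Fin 5 → ℝ) :=
  {v | ∃ σ : Equiv.Perm (Fin 4), Equiv.Perm.sign σ = 1 ∧
    ∃ ε : Fin 3 → ℝ, (∀ i, ε i = 1 ∨ ε i = -1) ∧
      v = Fin.cons (Real.sqrt (2 * gold))
            (fun i => ![ε 0 * gold, ε 1, ε 2 * gold⁻¹, 0] (σ i))}

/-- The 24 normal vectors of items (1) and (2). -/
def Cset : Set (Fin 5 → ℝ) := item1 ∪ item2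

/-- The 120 normal vectors of the right-angled hyperbolic 120-cell. -/
def Vset : Set (Fin 5 → ℝ) := Cset ∪ item3

/- ## auxiliary -/

def dot4 (f g : Fin 4 → ℝ) : ℝ := f 0 * g 0 + f 1 * g 1 + f 2 * g 2 + f 3 * g 3

lemma Bform_cons (a : ℝ) (f g : Fin 4 → ℝ) :
    Bform (Fin.cons a f) (Fin.cons a g) = -(a * a) + dot4 f g := by
  have e1 : (Fin.cons a f : Fin 5 → ℝ) 1 = f 0 := rfl
  have e2 : (Fin.cons a f : Fin 5 → ℝ) 2 = f 1 := rfl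
  have e3 : (Fin.cons a f : Fin 5 → ℝ) 3 = f 2 := rfl
  have e4 : (Fin.cons a f : Fin 5 → ℝ) 4 = f 3 := rfl
  have g1 : (Fin.cons a g : Fin 5 → ℝ) 1 = g 0 := rfl
  have g2 : (Fin.cons a g : Fin 5 → ℝ) 2 = g 1 := rfl
  have g3 : (Fin.cons a g : Fin 5 → ℝ) 3 = g 2 := rfl
  have g4 : (Fin.cons a g : Fin 5 → ℝ) 4 = g 3 := rfl
  rw [Bform, show (Fin.cons a f : Fin 5 → ℝ) 0 = a from rfl,
    show (Fin.cons a g : Fin 5 → ℝ) 0 = a from rfl,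
    e1, e2, e3, e4, g1, g2, g3, g4, dot4]
  ring

lemma ha : Real.sqrt (2 * gold) * Real.sqrt (2 * gold) = 1 + Real.sqrt 5 := by
  rw [Real.mul_self_sqrt (by unfold gold; nlinarith [Real.sqrt_nonneg 5])]
  unfold gold; ring

/-- two timelike vectors are never B-orthogonal -/
lemma timelike_not_orth (x w : Fin 5 → ℝ) (hx : Bform x x = -1)
    (hw : Bform w w < 0) : Bform x w ≠ 0 := by
  intro h0
  have hx0 : x 0 ≠ 0 := by
    intro h
    rw [Bform, h] at hx
    nlinarith [sq_nonneg (x 1), sq_nonneg (x 2), sq_nonneg (x 3), sq_nonneg (x 4)]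
  set r := w 0 / x 0 with hrdef
  have hr : r * x 0 = w 0 := div_mul_cancel₀ _ hx0
  have key : Bform w w - 2 * r * Bform x w + r ^ 2 * Bform x x =
      (w 1 - r * x 1) ^ 2 + (w 2 - r * x 2) ^ 2 + (w 3 - r * x 3) ^ 2 +
        (w 4 - r * x 4) ^ 2 - (w 0 - r * x 0) ^ 2 := by
    simp only [Bform]; ring
  rw [h0, hx] at key
  have hz : w 0 - r * x 0 = 0 := by rw [hr]; ring
  rw [hz] at key
  nlinarith [sq_nonneg (w 1 - r * x 1), sq_nonneg (w 2 - r * x 2),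
    sq_nonneg (w 3 - r * x 3), sq_nonneg (w 4 - r * x 4), sq_nonneg r]

lemma no_common (u v : Fin 5 → ℝ) (hv : 0 < Bform v v)
    (h : Bform u u * Bform v v < Bform u v ^ 2) :
    ¬∃ x : Fin 5 → ℝ, Bform x x = -1 ∧ Bform x u = 0 ∧ Bform x v = 0 := by
  rintro ⟨x, hxx, hxu, hxv⟩
  set w : Fin 5 → ℝ := fun i => Bform v v * u i - Bform u v * v i with hwdef
  have expand : Bform w w =
      Bform v v * (Bform u u * Bform v v - Bform u v ^ 2) := by
    simp only [Bform, hwdef]; ring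
  have hww : Bform w w < 0 := by
    rw [expand]
    exact mul_neg_of_pos_of_neg hv (by linarith)
  have hxw : Bform x w = 0 := by
    have e : Bform x w = Bform v v * Bform x u - Bform u v * Bform x v := by
      simp only [hwdef, Bform]; ring
    rw [e, hxu, hxv]; ring
  exact timelike_not_orth x w hxx hww hxw

/-- the arithmetic conclusion -/
lemma conclude (u v : Fin 5 → ℝ) (d : ℝ)
    (hd : d = 2 ∨ d = 0 ∨ d = -2 ∨ d = -4)
    (huu : Bform u u = 3 - Real.sqrt 5) (hvv : Bform v v = 3 - Real.sqrt 5)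
    (huv : Bform u v = d - (1 + Real.sqrt 5)) :
    Bform u v ^ 2 > Bform u u * Bform v v ∧ Bform u v ≠ 0 ∧
      ¬∃ x : Fin 5 → ℝ, Bform x x = -1 ∧ Bform x u = 0 ∧ Bform x v = 0 := by
  have h5 : Real.sqrt 5 ^ 2 = 5 := Real.sq_sqrt (by norm_num)
  have h5n : (0 : ℝ) ≤ Real.sqrt 5 := Real.sqrt_nonneg 5
  have h5l : 2 < Real.sqrt 5 := by nlinarith
  have h5u : Real.sqrt 5 < 3 := by nlinarith
  have h1 : Bform u v ^ 2 > Bform u u * Bform v v := by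
    rw [huu, hvv, huv]
    rcases hd with h | h | h | h <;> subst h <;> nlinarith
  refine ⟨h1, ?_, ?_⟩
  · rw [huv]
    rcases hd with h | h | h | h <;> subst h <;> intro hc <;> nlinarith
  · exact no_common u v (by rw [hvv]; linarith) h1

/- tail dot products -/

lemma dot4_item11 (j k : Fin 4) (s t : ℝ) :
    dot4 (fun i => if i = j then s * 2 else 0) (fun i => if i = k then t * 2 else 0) =
      if j = k then 4 * (s * t) else 0 := by
  fin_cases j <;> fin_cases k <;> simp [dot4] <;> ring

lemma dot4_item12 (j : Fin 4) (s : ℝ) (ε : Fin 4 → ℝ) :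
    dot4 (fun i => if i = j then s * 2 else 0) ε = 2 * (s * ε j) := by
  fin_cases j <;> simp [dot4] <;> ring

lemma dot4_item21 (j : Fin 4) (s : ℝ) (ε : Fin 4 → ℝ) :
    dot4 ε (fun i => if i = j then s * 2 else 0) = 2 * (s * ε j) := by
  fin_cases j <;> simp [dot4] <;> ring

lemma dot4_self_signs (ε : Fin 4 → ℝ) (hε : ∀ i, ε i = 1 ∨ ε i = -1) :
    dot4 ε ε = 4 := by
  have h : ∀ i, ε i * ε i = 1 := fun i => by rcases hε i with h | h <;> rw [h] <;> norm_num
  have := h 0; have := h 1; have := h 2; have := h 3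
  rw [dot4]; linarith

lemma dot4_signs (ε δ : Fin 4 → ℝ) (hε : ∀ i, ε i = 1 ∨ ε i = -1)
    (hδ : ∀ i, δ i = 1 ∨ δ i = -1) (hne : ε ≠ δ) :
    dot4 ε δ = 2 ∨ dot4 ε δ = 0 ∨ dot4 ε δ = -2 ∨ dot4 ε δ = -4 := by
  have hp : ∀ i, ε i * δ i = 1 ∨ ε i * δ i = -1 := fun i => by
    rcases hε i with h | h <;> rcases hδ i with h' | h' <;> rw [h, h'] <;> norm_num
  have heq : ∀ i, ε i * δ i = 1 → ε i = δ i := fun i h => by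
    rcases hε i with h1 | h1 <;> rcases hδ i with h2 | h2 <;>
      rw [h1, h2] at h ⊢ <;> norm_num at h
  have hd : dot4 ε δ = ε 0 * δ 0 + ε 1 * δ 1 + ε 2 * δ 2 + ε 3 * δ 3 := rfl
  rcases hp 0 with h0 | h0 <;> rcases hp 1 with h1 | h1 <;>
    rcases hp 2 with h2 | h2 <;> rcases hp 3 with h3 | h3 <;>
    rw [hd, h0, h1, h2, h3] <;> norm_num
  exact hne (funext fun i => by
    fin_cases i
    · exact heq 0 h0
    · exact heq 1 h1
    · exact heq 2 h2
    · exact heq 3 h3)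

/-- For distinct u, v in the 24-element set C one has B(u,v)² > B(u,u)·B(v,v); in
particular B(u,v) ≠ 0, and the corresponding hyperplanes of hyperbolic 4-space are
disjoint. -/
theorem stmt7 :
    ∀ u ∈ Cset, ∀ v ∈ Cset, u ≠ v →
      Bform u v ^ 2 > Bform u u * Bform v v ∧ Bform u v ≠ 0 ∧
      ¬∃ x : Fin 5 → ℝ, Bform x x = -1 ∧ Bform x u = 0 ∧ Bform x v = 0 := by
  intro u hu v hv hne
  have hself1 : ∀ (j : Fin 4) (s : ℝ), s = 1 ∨ s = -1 →
      dot4 (fun i => if i = j then s * 2 else 0) (fun i => if i = j then s * 2 else 0) = 4 := by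
    intro j s hs
    rw [dot4_item11]
    rcases hs with h | h <;> simp [h]
  rcases hu with ⟨j, s, hs, rfl⟩ | ⟨ε, hε, rfl⟩ <;>
    rcases hv with ⟨k, t, ht, rfl⟩ | ⟨δ, hδ, rfl⟩
  · -- item1 vs item1
    have huu := Bform_cons (Real.sqrt (2 * gold)) (fun i => if i = j then s * 2 else 0)
      (fun i => if i = j then s * 2 else 0)
    have hvv := Bform_cons (Real.sqrt (2 * gold)) (fun i => if i = k then t * 2 else 0)
      (fun i => if i = k then t * 2 else 0)
    have huv := Bform_cons (Real.sqrt (2 * gold)) (fun i => if i = j then s * 2 else 0)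
      (fun i => if i = k then t * 2 else 0)
    rw [hself1 j s hs, ha] at huu
    rw [hself1 k t ht, ha] at hvv
    rw [dot4_item11, ha] at huv
    by_cases hjk : j = k
    · subst hjk
      have hst : s ≠ t := by
        intro h; subst h; exact hne rfl
      have : s * t = -1 := by
        rcases hs with h | h <;> rcases ht with h' | h' <;> subst h <;> subst h' <;>
          first | exact absurd rfl hst | norm_num
      rw [if_pos rfl, this] at huv
      exact conclude _ _ (-4) (by norm_num) (by rw [huu]; ring) (by rw [hvv]; ring)
        (by rw [huv]; ring)
    · rw [if_neg hjk] at huv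
      exact conclude _ _ 0 (by norm_num) (by rw [huu]; ring) (by rw [hvv]; ring)
        (by rw [huv]; ring)
  · -- item1 vs item2
    have huu := Bform_cons (Real.sqrt (2 * gold)) (fun i => if i = j then s * 2 else 0)
      (fun i => if i = j then s * 2 else 0)
    have hvv := Bform_cons (Real.sqrt (2 * gold)) δ δ
    have huv := Bform_cons (Real.sqrt (2 * gold)) (fun i => if i = j then s * 2 else 0) δ
    rw [hself1 j s hs, ha] at huu
    rw [dot4_self_signs δ hδ, ha] at hvv
    rw [dot4_item12, ha] at huv
    have hsδ : s * δ j = 1 ∨ s * δ j = -1 := by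
      rcases hs with h | h <;> rcases hδ j with h' | h' <;> rw [h, h'] <;> norm_num
    rcases hsδ with h | h <;> rw [h] at huv
    · exact conclude _ _ 2 (by norm_num) (by rw [huu]; ring) (by rw [hvv]; ring)
        (by rw [huv]; ring)
    · exact conclude _ _ (-2) (by norm_num) (by rw [huu]; ring) (by rw [hvv]; ring)
        (by rw [huv]; ring)
  · -- item2 vs item1
    have huu := Bform_cons (Real.sqrt (2 * gold)) ε ε
    have hvv := Bform_cons (Real.sqrt (2 * gold)) (fun i => if i = k then t * 2 else 0)
      (fun i => if i = k then t * 2 else 0)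
    have huv := Bform_cons (Real.sqrt (2 * gold)) ε (fun i => if i = k then t * 2 else 0)
    rw [dot4_self_signs ε hε, ha] at huu
    rw [hself1 k t ht, ha] at hvv
    rw [dot4_item21, ha] at huv
    have hsε : t * ε k = 1 ∨ t * ε k = -1 := by
      rcases ht with h | h <;> rcases hε k with h' | h' <;> rw [h, h'] <;> norm_num
    rcases hsε with h | h <;> rw [h] at huv
    · exact conclude _ _ 2 (by norm_num) (by rw [huu]; ring) (by rw [hvv]; ring)
        (by rw [huv]; ring)
    · exact conclude _ _ (-2) (by norm_num) (by rw [huu]; ring) (by rw [hvv]; ring)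
        (by rw [huv]; ring)
  · -- item2 vs item2
    have huu := Bform_cons (Real.sqrt (2 * gold)) ε ε
    have hvv := Bform_cons (Real.sqrt (2 * gold)) δ δ
    have huv := Bform_cons (Real.sqrt (2 * gold)) ε δ
    rw [dot4_self_signs ε hε, ha] at huu
    rw [dot4_self_signs δ hδ, ha] at hvv
    rw [ha] at huv
    have hεδ : ε ≠ δ := by
      intro h; subst h; exact hne rfl
    have hd := dot4_signs ε δ hε hδ hεδ
    exact conclude _ _ (dot4 ε δ) hd (by rw [huu]; ring) (by rw [hvv]; ring)
      (by rw [huv]; ring)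
end
end
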